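/- For a rank-metric code C ≤ F_q^{n×m} and any subspace V ≤ F_q^n, dim C^⊥(V) = dim C^⊥ − m·dim V^⊥ + dim C(V^⊥), where C^⊥ = {X : tr(XY^T) = 0 for all Y ∈ C}. -/

import Mathlib

open Module

variable {K : Type} [Field K] [Fintype K] {n m : ℕ}

/-- Orthogonal complement w.r.t. the standard symmetric bilinear form on `Fin n → K`. -/
def stdPerp (V : Submodule K (Fin n → K)) : Submodule K (Fin n → K) where
  carrier := {w | ∀ v ∈ V, ∑ i, v i * w i = 0}
  zero_mem' := by intro v hv; simp
  add_mem' := by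
    intro a b ha hb v hv
    simp [Pi.add_apply, mul_add, Finset.sum_add_distrib, ha v hv, hb v hv]
  smul_mem' := by
    intro c a ha v hv
    simp only [Pi.smul_apply, smul_eq_mul, mul_left_comm, ← Finset.mul_sum, ha v hv, mul_zero]

/-- Matrices all of whose columns lie in `V` (i.e. with column space contained in `V`). -/
def colIn (m : ℕ) (V : Submodule K (Fin n → K)) : Submodule K (Matrix (Fin n) (Fin m) K) where
  carrier := {X | ∀ j, (fun i => X i j) ∈ V}
  zero_mem' := by
    intro j
    show (fun i => (0 : Matrix (Fin n) (Fin m) K) i j) ∈ V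
    simp only [Matrix.zero_apply]
    exact V.zero_mem
  add_mem' := by
    intro a b ha hb j
    exact V.add_mem (ha j) (hb j)
  smul_mem' := by
    intro c X hX j
    exact V.smul_mem c (hX j)

/-- The shortened subcode `C(W) = {X ∈ C : colsp X ≤ W}`. -/
def shortened (C : Submodule K (Matrix (Fin n) (Fin m) K))
    (W : Submodule K (Fin n → K)) : Submodule K (Matrix (Fin n) (Fin m) K) :=
  C ⊓ colIn m W

/-- The `q`-polymatroid rank function `ρ_C(V) = (dim C − dim C(V^⊥))/m`. -/
noncomputable def rhoCode (C : Submodule K (Matrix (Fin n) (Fin m) K))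
    (V : Submodule K (Fin n → K)) : ℚ :=
  ((finrank K C : ℚ) - (finrank K (shortened C (stdPerp V)) : ℚ)) / m

/-- The trace-dual code `C^⊥ = {X : tr(X Yᵀ) = 0 for all Y ∈ C}`. -/
def dualCode (C : Submodule K (Matrix (Fin n) (Fin m) K)) :
    Submodule K (Matrix (Fin n) (Fin m) K) where
  carrier := {X | ∀ Y ∈ C, ∑ i, ∑ j, X i j * Y i j = 0}
  zero_mem' := by intro Y hY; simp
  add_mem' := by
    intro a b ha hb Y hY
    simp [Matrix.add_apply, add_mul, Finset.sum_add_distrib, ha Y hY, hb Y hY]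
  smul_mem' := by
    intro c X hX Y hY
    simp only [Matrix.smul_apply, smul_eq_mul, mul_assoc, ← Finset.mul_sum, hX Y hY, mul_zero]

set_option linter.unusedSectionVars false

noncomputable def pForm (K : Type) [Field K] (n : ℕ) : LinearMap.BilinForm K (Fin n → K) :=
  LinearMap.mk₂ K (fun x y => ∑ i, x i * y i)
    (fun x x' y => by simp [add_mul, Finset.sum_add_distrib])
    (fun c x y => by simp [Finset.mul_sum, mul_assoc])
    (fun x y y' => by simp [mul_add, Finset.sum_add_distrib])
    (fun c x y => by simp [Finset.mul_sum, mul_left_comm])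

lemma pForm_apply (x y : Fin n → K) : pForm K n x y = ∑ i, x i * y i := rfl

lemma pForm_symm : (pForm K n).IsSymm := ⟨fun x y => by simp [pForm_apply, mul_comm]⟩

lemma pForm_nondeg : (pForm K n).Nondegenerate := by
  refine LinearMap.BilinForm.Nondegenerate.ofSeparatingLeft ?_
  intro x h
  funext i
  simpa [pForm_apply, Pi.single_apply, mul_ite] using h (Pi.single i 1)

noncomputable def mForm (K : Type) [Field K] (n m : ℕ) :
    LinearMap.BilinForm K (Matrix (Fin n) (Fin m) K) :=
  LinearMap.mk₂ K (fun X Y => ∑ i, ∑ j, X i j * Y i j)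
    (fun X X' Y => by simp [Matrix.add_apply, add_mul, Finset.sum_add_distrib])
    (fun c X Y => by simp [Matrix.smul_apply, Finset.mul_sum, mul_assoc])
    (fun X Y Y' => by simp [Matrix.add_apply, mul_add, Finset.sum_add_distrib])
    (fun c X Y => by simp [Matrix.smul_apply, Finset.mul_sum, mul_left_comm])

lemma mForm_apply (X Y : Matrix (Fin n) (Fin m) K) :
    mForm K n m X Y = ∑ i, ∑ j, X i j * Y i j := rfl

lemma mForm_symm : (mForm K n m).IsSymm := ⟨fun X Y => by simp [mForm_apply, mul_comm]⟩

lemma mForm_nondeg : (mForm K n m).Nondegenerate := by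
  refine LinearMap.BilinForm.Nondegenerate.ofSeparatingLeft ?_
  intro X h
  ext i j
  simpa [mForm_apply, mul_ite, ite_mul, Finset.sum_ite_eq'] using
    h (Matrix.of (fun a b => (if a = i then 1 else 0) * (if b = j then (1:K) else 0)))

-- copies of the pinned defs for scratch testing
lemma stdPerp_eq (V : Submodule K (Fin n → K)) :
    stdPerp V = (pForm K n).orthogonal V := by
  ext w
  simp only [LinearMap.BilinForm.mem_orthogonal_iff, LinearMap.BilinForm.IsOrtho, pForm_apply]
  rfl

lemma dualCode_eq (C : Submodule K (Matrix (Fin n) (Fin m) K)) :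
    dualCode C = (mForm K n m).orthogonal C := by
  ext X
  have comm : ∀ A B : Matrix (Fin n) (Fin m) K, mForm K n m A B = mForm K n m B A :=
    fun A B => by simp only [mForm_apply]; exact Finset.sum_congr rfl fun i _ =>
      Finset.sum_congr rfl fun j _ => mul_comm _ _
  constructor
  · intro h Y hY
    show mForm K n m Y X = 0
    rw [comm]
    exact h Y hY
  · intro h Y hY
    show ∑ i, ∑ j, X i j * Y i j = 0
    have h2 : mForm K n m Y X = 0 := h Y hY
    rw [comm] at h2
    exact h2

lemma finrank_stdPerp (V : Submodule K (Fin n → K)) :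
    finrank K (stdPerp V) = n - finrank K V := by
  rw [stdPerp_eq, LinearMap.BilinForm.finrank_orthogonal pForm_nondeg,
    Module.finrank_fintype_fun_eq_card, Fintype.card_fin]

lemma finrank_dualCode_add (D : Submodule K (Matrix (Fin n) (Fin m) K)) :
    finrank K D + finrank K (dualCode D) = n * m := by
  rw [dualCode_eq, LinearMap.BilinForm.finrank_orthogonal mForm_nondeg,
    Module.finrank_matrix, Fintype.card_fin, Fintype.card_fin, Module.finrank_self, mul_one]
  have : finrank K D ≤ finrank K (Matrix (Fin n) (Fin m) K) := Submodule.finrank_le D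
  rw [Module.finrank_matrix, Fintype.card_fin, Fintype.card_fin, Module.finrank_self, mul_one]
    at this
  omega

noncomputable def colEquiv (V : Submodule K (Fin n → K)) :
    (colIn m V) ≃ₗ[K] (Fin m → V) where
  toFun X j := ⟨fun i => X.1 i j, X.2 j⟩
  map_add' X Y := by funext j; ext i; rfl
  map_smul' c X := by funext j; ext i; rfl
  invFun f := ⟨Matrix.of (fun i j => (f j).1 i), fun j => (f j).2⟩
  left_inv X := rfl
  right_inv f := rfl

lemma finrank_colIn (V : Submodule K (Fin n → K)) :
    finrank K (colIn m V) = m * finrank K V := by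
  rw [(colEquiv V).finrank_eq, Module.finrank_pi_fintype, Finset.sum_const,
    Finset.card_univ, Fintype.card_fin, smul_eq_mul]

lemma dualCode_colIn (V : Submodule K (Fin n → K)) :
    dualCode (colIn m V) = colIn m (stdPerp V) := by
  ext X
  constructor
  · intro h j v hv
    have hY : (Matrix.of (fun a b => if b = j then v a else 0)) ∈ colIn m V := by
      intro b
      by_cases hb : b = j
      · simpa [hb] using hv
      · simp only [Matrix.of_apply, if_neg hb]; exact V.zero_mem
    have := h _ hY
    simp only [Matrix.of_apply, mul_ite, mul_zero, Finset.sum_ite_eq',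
      Finset.mem_univ, if_true] at this
    calc ∑ i, v i * X i j = ∑ i, X i j * v i := by
          exact Finset.sum_congr rfl fun i _ => mul_comm _ _
      _ = 0 := this
  · intro h Y hY
    have : ∀ j, ∑ i, X i j * Y i j = 0 := by
      intro j
      have := h j _ (hY j)
      calc ∑ i, X i j * Y i j = ∑ i, Y i j * X i j :=
            Finset.sum_congr rfl fun i _ => mul_comm _ _
        _ = 0 := this
    rw [Finset.sum_comm]
    simp [this]

lemma orthogonal_sup {M : Type} [AddCommGroup M] [Module K M] (B : LinearMap.BilinForm K M)
    (A A' : Submodule K M) :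
    B.orthogonal (A ⊔ A') = B.orthogonal A ⊓ B.orthogonal A' := by
  apply le_antisymm
  · exact le_inf (B.orthogonal_le le_sup_left) (B.orthogonal_le le_sup_right)
  · rintro x ⟨h1, h2⟩ y hy
    obtain ⟨a, ha, b, hb, rfl⟩ := Submodule.mem_sup.mp hy
    show B (a + b) x = 0
    rw [map_add, LinearMap.add_apply, h1 a ha, h2 b hb, add_zero]

lemma dualCode_dualCode (C : Submodule K (Matrix (Fin n) (Fin m) K)) :
    dualCode (dualCode C) = C := by
  rw [dualCode_eq, dualCode_eq]
  exact LinearMap.BilinForm.orthogonal_orthogonal mForm_nondeg mForm_symm.isRefl C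


set_option linter.unusedSectionVars false in
/-- `dim C^⊥(V) = dim C^⊥ − m·dim V^⊥ + dim C(V^⊥)`. -/
theorem dim_shortened_dualCode
    (C : Submodule K (Matrix (Fin n) (Fin m) K)) (V : Submodule K (Fin n → K)) :
    (finrank K (shortened (dualCode C) V) : ℤ) =
      (finrank K (dualCode C) : ℤ) - (m : ℤ) * (finrank K (stdPerp V) : ℤ)
        + (finrank K (shortened C (stdPerp V)) : ℤ) := by
  have hsupinf := Submodule.finrank_sup_add_finrank_inf_eq (dualCode C) (colIn m V)
  have hdual : dualCode (dualCode C ⊔ colIn m V) = shortened C (stdPerp V) := by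
    rw [dualCode_eq (dualCode C ⊔ colIn m V), orthogonal_sup, ← dualCode_eq, ← dualCode_eq,
      dualCode_dualCode, dualCode_colIn]
    rfl
  have hsum := finrank_dualCode_add (dualCode C ⊔ colIn m V)
  rw [hdual] at hsum
  have hcol := finrank_colIn (m := m) V
  have hperp := finrank_stdPerp V
  have hVle : finrank K V ≤ n := by
    have := Submodule.finrank_le V
    rwa [Module.finrank_fintype_fun_eq_card, Fintype.card_fin] at this
  -- turn everything into ℤ
  have hperpZ : (finrank K (stdPerp V) : ℤ) = (n : ℤ) - finrank K V := by
    rw [hperp]; push_cast [Nat.cast_sub hVle]; ring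
  have hsupZ : (finrank K ↥(dualCode C ⊔ colIn m V) : ℤ)
      = (n : ℤ) * m - finrank K (shortened C (stdPerp V)) := by
    have : (finrank K ↥(dualCode C ⊔ colIn m V) : ℤ)
        + finrank K (shortened C (stdPerp V)) = (n : ℤ) * m := by exact_mod_cast hsum
    linarith
  have hinfZ : (finrank K (shortened (dualCode C) V) : ℤ)
      = (finrank K (dualCode C) : ℤ) + finrank K (colIn m V)
        - finrank K ↥(dualCode C ⊔ colIn m V) := by
    have : (finrank K ↥(dualCode C ⊔ colIn m V) : ℤ)
        + finrank K (shortened (dualCode C) V)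
        = (finrank K (dualCode C) : ℤ) + finrank K (colIn m V) := by exact_mod_cast hsupinf
    linarith
  have hcolZ : (finrank K (colIn m V) : ℤ) = (m : ℤ) * finrank K V := by exact_mod_cast hcol
  rw [hinfZ, hsupZ, hcolZ, hperpZ]
  ring
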